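/- arXiv:1502.01789 — 3 statements merged into one kernel-verified Lean document; each statement's English description precedes it below -/
import Mathlib

section
/- For a 2-dimensional symplectic space (V,J) ≅ (ℚ_p², det), with Lagrangian lines ℓ_a = {(x, ax)}, ℓ_b = {(y, by)}, ℓ_c = {(z, cz)} for pairwise distinct a, b, c ∈ ℚ_p, the quadratic form Q(z₁,z₂,z₃) = J(z₁,z₂) + J(z₂,z₃) + J(z₃,z₁) on ℓ_a ⊕ ℓ_b ⊕ ℓ_c diagonalizes as Q = ((b-a)/4)(y-z+x)² + ((c-b)/4)(z-x+y)² + ((a-c)/4)(x-y+z)², and has determinant 1/(a-b) + 1/(b-c) in ℚ_p^×/(ℚ_p^×)² and Hasse invariant (b-a, c-b)_p (c-b, a-c)_p (b-a, a-c)_p. -/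
open Classical

/-- The Hilbert symbol on `ℚ_p`: `(a,b)_p = 1` iff `z² = ax² + by²` has a nontrivial
solution, and `-1` otherwise. -/
noncomputable def hilbertSym (p : ℕ) [Fact p.Prime] (a b : ℚ_[p]) : ℤ :=
  if ∃ x y z : ℚ_[p], ¬(x = 0 ∧ y = 0 ∧ z = 0) ∧ z ^ 2 = a * x ^ 2 + b * y ^ 2 then 1 else -1

/-- The standard symplectic form on `ℚ_p²`. -/
noncomputable def Jstd (p : ℕ) [Fact p.Prime] (u v : ℚ_[p] × ℚ_[p]) : ℚ_[p] := u.1 * v.2 - u.2 * v.1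

lemma hilbertSym_quarter (p : ℕ) [Fact p.Prime] (a b : ℚ_[p]) :
    hilbertSym p (a / 4) (b / 4) = hilbertSym p a b := by
  have h2 : (2 : ℚ_[p]) ≠ 0 := two_ne_zero
  have h : (∃ x y z : ℚ_[p], ¬(x = 0 ∧ y = 0 ∧ z = 0) ∧
      z ^ 2 = a / 4 * x ^ 2 + b / 4 * y ^ 2) ↔
      (∃ x y z : ℚ_[p], ¬(x = 0 ∧ y = 0 ∧ z = 0) ∧ z ^ 2 = a * x ^ 2 + b * y ^ 2) := by
    constructor
    · rintro ⟨x, y, z, hnt, he⟩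
      refine ⟨x / 2, y / 2, z, ?_, ?_⟩
      · simpa [div_eq_zero_iff, h2] using hnt
      · rw [he]; ring
    · rintro ⟨x, y, z, hnt, he⟩
      refine ⟨2 * x, 2 * y, z, ?_, ?_⟩
      · simpa [mul_eq_zero, h2] using hnt
      · rw [he]; ring
  simp only [hilbertSym, h]

/-- For Lagrangian lines `ℓ_a, ℓ_b, ℓ_c` (pairwise distinct slopes) in `(ℚ_p², det)`,
the form `Q(z₁,z₂,z₃) = J(z₁,z₂)+J(z₂,z₃)+J(z₃,z₁)` diagonalizes as
`((b-a)/4)(y-z+x)² + ((c-b)/4)(z-x+y)² + ((a-c)/4)(x-y+z)²`, has determinant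
`1/(a-b) + 1/(b-c)` modulo squares, and Hasse invariant
`(b-a,c-b)_p (c-b,a-c)_p (b-a,a-c)_p`. -/
theorem lagrangian_triple_quadratic_form (p : ℕ) [Fact p.Prime] (a b c : ℚ_[p])
    (hab : a ≠ b) (hbc : b ≠ c) (hac : a ≠ c) :
    (∀ x y z : ℚ_[p],
      Jstd p (x, a * x) (y, b * y) + Jstd p (y, b * y) (z, c * z)
          + Jstd p (z, c * z) (x, a * x)
        = (b - a) / 4 * (y - z + x) ^ 2 + (c - b) / 4 * (z - x + y) ^ 2
          + (a - c) / 4 * (x - y + z) ^ 2) ∧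
    (∃ s : ℚ_[p], s ≠ 0 ∧
      (Matrix.det !![0, (b - a) / 2, (a - c) / 2;
                     (b - a) / 2, 0, (c - b) / 2;
                     (a - c) / 2, (c - b) / 2, 0])
        = (1 / (a - b) + 1 / (b - c)) * s ^ 2) ∧
    (hilbertSym p ((b - a) / 4) ((c - b) / 4) * hilbertSym p ((c - b) / 4) ((a - c) / 4)
        * hilbertSym p ((b - a) / 4) ((a - c) / 4)
      = hilbertSym p (b - a) (c - b) * hilbertSym p (c - b) (a - c)
        * hilbertSym p (b - a) (a - c)) := by
  have hab' : a - b ≠ 0 := sub_ne_zero.mpr hab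
  have hbc' : b - c ≠ 0 := sub_ne_zero.mpr hbc
  refine ⟨fun x y z => by simp only [Jstd]; ring, ⟨(a - b) * (b - c) / 2, ?_, ?_⟩, ?_⟩
  · exact div_ne_zero (mul_ne_zero hab' hbc') two_ne_zero
  · simp only [Matrix.det_fin_three, Matrix.cons_val', Matrix.cons_val_zero,
      Matrix.cons_val_one, Matrix.head_cons, Matrix.empty_val', Matrix.cons_val_fin_one,
      Matrix.head_fin_const, Matrix.cons_val_two, Matrix.tail_cons, Matrix.of_apply]
    field_simp
    ring
  · rw [hilbertSym_quarter, hilbertSym_quarter, hilbertSym_quarter]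
end

section
/- The Schrödinger representation of the p-adic Heisenberg group on 𝒟(ℚ_p^n) (locally constant compactly supported complex functions) is irreducible: any nonzero subspace of 𝒟(ℚ_p^n) invariant under all operators T_z[ψ](ξ) = ψ(ξ+x)χ(∑_i (y_i ξ_i + x_i y_i /2)), for z = (x,y) ∈ ℚ_p^{2n}, equals 𝒟(ℚ_p^n). -/
open Classical

noncomputable def padicFract (p : ℕ) [Fact p.Prime] (x : ℚ_[p]) : ℚ :=
  if h : ∃ r : ℚ, 0 ≤ r ∧ r < 1 ∧ (∃ k : ℕ, ∃ m : ℤ, r * (p : ℚ) ^ k = (m : ℚ)) ∧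
      ‖x - (r : ℚ_[p])‖ ≤ 1 then h.choose else 0

noncomputable def stdChar (p : ℕ) [Fact p.Prime] (x : ℚ_[p]) : ℂ :=
  Complex.exp (2 * Real.pi * Complex.I * (padicFract p x : ℂ))

/-- The Heisenberg/Schrödinger operator
`T_{(x,y)}[ψ](ξ) = ψ(ξ+x) χ(∑ᵢ (yᵢξᵢ + xᵢyᵢ/2))` on functions `ℚ_p^n → ℂ`. -/
noncomputable def heisenbergOp (p : ℕ) [Fact p.Prime] (n : ℕ)
    (x y : Fin n → ℚ_[p]) (ψ : (Fin n → ℚ_[p]) → ℂ) : (Fin n → ℚ_[p]) → ℂ :=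
  fun ξ => ψ (ξ + x) * stdChar p (∑ i, (y i * ξ i + x i * y i / 2))

namespace SchroedingerAux

variable {p : ℕ} [Fact p.Prime]

def Pred (p : ℕ) [Fact p.Prime] (x : ℚ_[p]) (r : ℚ) : Prop :=
  0 ≤ r ∧ r < 1 ∧ (∃ k : ℕ, ∃ m : ℤ, r * (p : ℚ) ^ k = (m : ℚ)) ∧ ‖x - (r : ℚ_[p])‖ ≤ 1

lemma pprime : p.Prime := Fact.out
lemma oneltR : (1:ℝ) < (p:ℝ) := by exact_mod_cast pprime.one_lt
lemma pposR : (0:ℝ) < (p:ℝ) := lt_trans one_pos oneltR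

lemma nonarch_sub (a b : ℚ_[p]) : ‖a - b‖ ≤ max ‖a‖ ‖b‖ := by
  have h := Padic.nonarchimedean a (-b)
  rw [norm_neg] at h
  rw [sub_eq_add_neg]
  exact h

/-- A rational with p-power denominator that is a p-adic integer is an integer. -/
lemma int_of_pden {q : ℚ} {k : ℕ} {m : ℤ} (h : q * (p:ℚ) ^ k = (m:ℚ))
    (hn : ‖(q : ℚ_[p])‖ ≤ 1) : ∃ z : ℤ, q = (z:ℚ) := by
  have hcast : ((m:ℤ) : ℚ_[p]) = (q:ℚ_[p]) * (p:ℚ_[p])^k := by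
    have := congrArg (fun t : ℚ => (t : ℚ_[p])) h
    push_cast at this
    exact this.symm
  have h2 : ‖((m:ℤ) : ℚ_[p])‖ ≤ (p:ℝ)^(-(k:ℤ)) := by
    rw [hcast, norm_mul, Padic.norm_p_pow]
    calc ‖(q:ℚ_[p])‖ * (p:ℝ)^(-(k:ℤ)) ≤ 1 * (p:ℝ)^(-(k:ℤ)) := by
          apply mul_le_mul_of_nonneg_right hn (le_of_lt (zpow_pos pposR _))
      _ = (p:ℝ)^(-(k:ℤ)) := one_mul _
  have hdvd : ((p:ℤ))^k ∣ m := (Padic.norm_int_le_pow_iff_dvd m k).mp h2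
  obtain ⟨z, hz⟩ := hdvd
  refine ⟨z, ?_⟩
  have hpk : ((p:ℚ))^k ≠ 0 := pow_ne_zero _ (by exact_mod_cast pprime.ne_zero)
  have : q * (p:ℚ)^k = (z:ℚ) * (p:ℚ)^k := by rw [h, hz]; push_cast; ring
  exact mul_right_cancel₀ hpk this

lemma pred_unique {x : ℚ_[p]} {r r' : ℚ} (h : Pred p x r) (h' : Pred p x r') : r = r' := by
  obtain ⟨h0, h1, ⟨k, m, hkm⟩, hn⟩ := h
  obtain ⟨h0', h1', ⟨k', m', hkm'⟩, hn'⟩ := h'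
  have hden : (r - r') * (p:ℚ)^(k+k') = ((m * p^k' - m' * p^k : ℤ) : ℚ) := by
    push_cast
    rw [pow_add, sub_mul]
    rw [show r * ((p:ℚ)^k * (p:ℚ)^k') = (r * (p:ℚ)^k) * (p:ℚ)^k' by ring, hkm]
    rw [show r' * ((p:ℚ)^k * (p:ℚ)^k') = (r' * (p:ℚ)^k') * (p:ℚ)^k by ring, hkm']
  have hnorm : ‖((r - r' : ℚ) : ℚ_[p])‖ ≤ 1 := by
    have : ((r - r' : ℚ) : ℚ_[p]) = (x - (r':ℚ_[p])) - (x - (r:ℚ_[p])) := by push_cast; ring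
    rw [this]
    calc ‖(x - (r':ℚ_[p])) - (x - (r:ℚ_[p]))‖
        ≤ max ‖(x - (r':ℚ_[p]))‖ ‖(x - (r:ℚ_[p]))‖ := nonarch_sub _ _
      _ ≤ 1 := max_le hn' hn
  obtain ⟨z, hz⟩ := int_of_pden hden hnorm
  have hz1 : (z:ℚ) < 1 := by rw [← hz]; linarith
  have hz2 : (-1:ℚ) < z := by rw [← hz]; linarith
  have : z = 0 := by
    have b1 : z < 1 := by exact_mod_cast hz1
    have b2 : -1 < z := by exact_mod_cast hz2
    omega
  have : r - r' = 0 := by rw [hz, this]; simp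
  linarith

lemma pred_exists (x : ℚ_[p]) : ∃ r : ℚ, Pred p x r := by
  -- choose ν with ‖x‖ ≤ p^ν
  obtain ⟨ν, hν⟩ := pow_unbounded_of_one_lt ‖x‖ (oneltR (p := p))
  have hy : ‖(p:ℚ_[p])^ν * x‖ ≤ 1 := by
    rw [norm_mul, Padic.norm_p_pow]
    rw [show (-(ν:ℤ)) = (0:ℤ) - ν by ring, zpow_sub₀ (ne_of_gt pposR), zpow_zero]
    rw [div_mul_eq_mul_div, one_mul, div_le_one (zpow_pos pposR _)]
    calc ‖x‖ ≤ (p:ℝ)^ν := le_of_lt hν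
      _ = (p:ℝ)^(ν:ℤ) := by norm_cast
  set y : ℤ_[p] := ⟨(p:ℚ_[p])^ν * x, hy⟩ with hydef
  set a : ℕ := y.appr ν with hadef
  have hspec : ‖y - (a:ℤ_[p])‖ ≤ (p:ℝ)^(-(ν:ℤ)) := by
    rw [PadicInt.norm_le_pow_iff_mem_span_pow]
    exact PadicInt.appr_spec ν y
  -- r = fract (a / p^ν)
  refine ⟨Int.fract ((a:ℚ) / (p:ℚ)^ν), Int.fract_nonneg _, Int.fract_lt_one _, ⟨ν, ?_⟩, ?_⟩
  · refine ⟨a - ⌊(a:ℚ) / (p:ℚ)^ν⌋ * (p:ℤ)^ν, ?_⟩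
    rw [Int.fract]
    push_cast
    rw [sub_mul, div_mul_cancel₀]
    exact pow_ne_zero _ (by exact_mod_cast pprime.ne_zero)
  · -- ‖x - fract‖ ≤ 1
    have key : ‖x - ((a:ℚ)/(p:ℚ)^ν : ℚ)‖ ≤ 1 := by
      have hx : x - (((a:ℚ)/(p:ℚ)^ν : ℚ) : ℚ_[p]) = ((y:ℚ_[p]) - (a:ℚ_[p])) / (p:ℚ_[p])^ν := by
        have hpν : ((p:ℚ_[p]))^ν ≠ 0 :=
          pow_ne_zero _ (by exact_mod_cast (Nat.cast_injective.ne_iff.mpr pprime.ne_zero : ((p:ℚ_[p]) ≠ 0)))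
        have hyv : (y:ℚ_[p]) = (p:ℚ_[p])^ν * x := rfl
        rw [hyv, eq_div_iff hpν]
        push_cast
        rw [sub_mul, div_mul_cancel₀ _ hpν]
        ring
      rw [hx, norm_div, Padic.norm_p_pow]
      have hnum : ‖(y:ℚ_[p]) - (a:ℚ_[p])‖ ≤ (p:ℝ)^(-(ν:ℤ)) := by
        have : ((y - (a:ℤ_[p]) : ℤ_[p]) : ℚ_[p]) = (y:ℚ_[p]) - (a:ℚ_[p]) := by push_cast; ring
        rw [← this, ← PadicInt.norm_def]
        exact hspec
      rw [div_le_one (zpow_pos pposR _)]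
      exact hnum
    have hfr : (Int.fract ((a:ℚ) / (p:ℚ)^ν) : ℚ) = (a:ℚ)/(p:ℚ)^ν - ⌊(a:ℚ) / (p:ℚ)^ν⌋ := rfl
    have : x - ((Int.fract ((a:ℚ) / (p:ℚ)^ν) : ℚ) : ℚ_[p])
        = (x - (((a:ℚ)/(p:ℚ)^ν : ℚ) : ℚ_[p])) + ((⌊(a:ℚ) / (p:ℚ)^ν⌋ : ℤ) : ℚ_[p]) := by
      rw [hfr]; push_cast; ring
    rw [this]
    calc ‖(x - (((a:ℚ)/(p:ℚ)^ν : ℚ) : ℚ_[p])) + ((⌊(a:ℚ) / (p:ℚ)^ν⌋ : ℤ) : ℚ_[p])‖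
        ≤ max ‖x - (((a:ℚ)/(p:ℚ)^ν : ℚ) : ℚ_[p])‖ ‖((⌊(a:ℚ) / (p:ℚ)^ν⌋ : ℤ) : ℚ_[p])‖ :=
          Padic.nonarchimedean _ _
      _ ≤ 1 := max_le key (Padic.norm_int_le_one _)

lemma padicFract_pred (x : ℚ_[p]) : Pred p x (padicFract p x) := by
  have h : ∃ r : ℚ, 0 ≤ r ∧ r < 1 ∧ (∃ k : ℕ, ∃ m : ℤ, r * (p : ℚ) ^ k = (m : ℚ)) ∧
      ‖x - (r : ℚ_[p])‖ ≤ 1 := pred_exists x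
  rw [padicFract, dif_pos h]
  exact h.choose_spec

lemma padicFract_eq {x : ℚ_[p]} {r : ℚ} (h : Pred p x r) : padicFract p x = r :=
  pred_unique (padicFract_pred x) h

lemma padicFract_of_norm_le_one {x : ℚ_[p]} (h : ‖x‖ ≤ 1) : padicFract p x = 0 :=
  padicFract_eq ⟨le_refl 0, zero_lt_one, ⟨0, 0, by norm_num⟩, by simpa using h⟩

lemma stdChar_of_norm_le_one {x : ℚ_[p]} (h : ‖x‖ ≤ 1) : stdChar p x = 1 := by
  rw [stdChar, padicFract_of_norm_le_one h]
  simp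

lemma stdChar_zero : stdChar p 0 = 1 :=
  stdChar_of_norm_le_one (by simp)

lemma stdChar_ne_zero (x : ℚ_[p]) : stdChar p x ≠ 0 := Complex.exp_ne_zero _

lemma stdChar_add (x y : ℚ_[p]) : stdChar p (x + y) = stdChar p x * stdChar p y := by
  obtain ⟨h10, h11, ⟨k1, m1, hk1⟩, hn1⟩ := padicFract_pred (p := p) x
  obtain ⟨h20, h21, ⟨k2, m2, hk2⟩, hn2⟩ := padicFract_pred (p := p) y
  obtain ⟨h30, h31, ⟨k3, m3, hk3⟩, hn3⟩ := padicFract_pred (p := p) (x + y)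
  set r1 := padicFract p x
  set r2 := padicFract p y
  set r3 := padicFract p (x + y)
  have hden : (r1 + r2 - r3) * (p:ℚ)^(k1 + k2 + k3)
      = ((m1 * p^(k2+k3) + m2 * p^(k1+k3) - m3 * p^(k1+k2) : ℤ) : ℚ) := by
    push_cast
    rw [show (r1 + r2 - r3) * (p:ℚ)^(k1 + k2 + k3)
        = (r1 * (p:ℚ)^k1) * (p:ℚ)^(k2+k3) + (r2 * (p:ℚ)^k2) * (p:ℚ)^(k1+k3)
          - (r3 * (p:ℚ)^k3) * (p:ℚ)^(k1+k2) by rw [pow_add, pow_add, pow_add, pow_add]; ring]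
    rw [hk1, hk2, hk3]
  have hnorm : ‖((r1 + r2 - r3 : ℚ) : ℚ_[p])‖ ≤ 1 := by
    have heq : ((r1 + r2 - r3 : ℚ) : ℚ_[p])
        = ((x + y) - (r3:ℚ_[p])) - ((x - (r1:ℚ_[p])) + (y - (r2:ℚ_[p]))) := by push_cast; ring
    rw [heq]
    refine le_trans (nonarch_sub _ _) (max_le hn3 ?_)
    exact le_trans (Padic.nonarchimedean _ _) (max_le hn1 hn2)
  obtain ⟨z, hz⟩ := int_of_pden hden hnorm
  have hr3 : (r3 : ℂ) = (r1 : ℂ) + r2 - z := by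
    have : (r1 + r2 - r3 : ℚ) = (z : ℚ) := hz
    have := congrArg (fun t : ℚ => (t : ℂ)) this
    push_cast at this
    push_cast
    linear_combination -this
  rw [stdChar, stdChar, stdChar, hr3, ← Complex.exp_add]
  rw [show 2 * (Real.pi:ℂ) * Complex.I * ((r1:ℂ) + r2 - z)
      = 2 * (Real.pi:ℂ) * Complex.I * (r1:ℂ) + 2 * (Real.pi:ℂ) * Complex.I * (r2:ℂ)
        + (-z : ℤ) * (2 * (Real.pi:ℂ) * Complex.I) by push_cast; ring]
  rw [Complex.exp_add, Complex.exp_int_mul_two_pi_mul_I]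
  ring

lemma stdChar_eq_one_iff (x : ℚ_[p]) : stdChar p x = 1 ↔ ‖x‖ ≤ 1 := by
  constructor
  · intro h
    obtain ⟨h0, h1, _, hn⟩ := padicFract_pred (p := p) x
    rw [stdChar, Complex.exp_eq_one_iff] at h
    obtain ⟨z, hzeq⟩ := h
    have h2πI : (2 * (Real.pi:ℂ) * Complex.I) ≠ 0 := by
      have hpi : (Real.pi:ℂ) ≠ 0 := by exact_mod_cast Real.pi_ne_zero
      exact mul_ne_zero (mul_ne_zero two_ne_zero hpi) Complex.I_ne_zero
    have : ((padicFract p x : ℚ) : ℂ) = (z : ℂ) := by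
      have h2 : (2 * (Real.pi:ℂ) * Complex.I) * ((padicFract p x : ℚ) : ℂ)
          = (2 * (Real.pi:ℂ) * Complex.I) * (z : ℂ) := by rw [hzeq]; ring
      exact mul_left_cancel₀ h2πI h2
    have hq : (padicFract p x : ℚ) = (z : ℚ) := by exact_mod_cast this
    have hz0 : z = 0 := by
      have b1 : (z:ℚ) < 1 := by rw [← hq]; exact h1
      have b2 : (0:ℚ) ≤ z := by rw [← hq]; exact h0
      have b1' : z < 1 := by exact_mod_cast b1
      have b2' : 0 ≤ z := by exact_mod_cast b2
      omega
    have : padicFract p x = 0 := by rw [hq, hz0]; simp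
    simpa [this] using hn
  · exact stdChar_of_norm_le_one

lemma stdChar_nsmul (a : ℕ) (x : ℚ_[p]) : stdChar p ((a : ℚ_[p]) * x) = stdChar p x ^ a := by
  induction a with
  | zero => simp [stdChar_zero]
  | succ a ih =>
      have : ((a + 1 : ℕ) : ℚ_[p]) * x = (a : ℚ_[p]) * x + x := by push_cast; ring
      rw [this, stdChar_add, ih, pow_succ]

lemma stdChar_mul_neg (x : ℚ_[p]) : stdChar p (-x) * stdChar p x = 1 := by
  rw [← stdChar_add]
  simp [stdChar_zero]

lemma stdChar_sum {ι : Type*} (s : Finset ι) (f : ι → ℚ_[p]) :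
    stdChar p (∑ i ∈ s, f i) = ∏ i ∈ s, stdChar p (f i) := by
  classical
  induction s using Finset.induction_on with
  | empty => simp [stdChar_zero]
  | insert _ _ hnotmem ih =>
      rw [Finset.sum_insert hnotmem, Finset.prod_insert hnotmem, stdChar_add, ih]

lemma pQ_ne_zero : (p : ℚ_[p]) ≠ 0 := by exact_mod_cast pprime.ne_zero

lemma sum_char (η : ℚ_[p]) (m M : ℕ) (h : ‖η‖ ≤ (p:ℝ)^(M:ℤ)) :
    ∑ a ∈ Finset.range (p^(m+M)), stdChar p ((a:ℚ_[p]) * η / (p:ℚ_[p])^m)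
      = if ‖η‖ ≤ (p:ℝ)^(-(m:ℤ)) then ((p:ℂ)^(m+M)) else 0 := by
  set z := stdChar p (η / (p:ℚ_[p])^m) with hzdef
  have hterm : ∀ a : ℕ, stdChar p ((a:ℚ_[p]) * η / (p:ℚ_[p])^m) = z ^ a := by
    intro a
    rw [mul_div_assoc, hzdef]
    exact stdChar_nsmul a _
  have hzN : z ^ (p^(m+M)) = 1 := by
    rw [hzdef, ← stdChar_nsmul]
    have heq : ((p^(m+M) : ℕ) : ℚ_[p]) * (η / (p:ℚ_[p])^m) = (p:ℚ_[p])^M * η := by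
      have hpm : ((p:ℚ_[p]))^m ≠ 0 := pow_ne_zero _ pQ_ne_zero
      field_simp
      rw [pow_add]
      push_cast
      ring
    rw [heq]
    apply stdChar_of_norm_le_one
    rw [norm_mul, Padic.norm_p_pow]
    calc (p:ℝ)^(-(M:ℤ)) * ‖η‖ ≤ (p:ℝ)^(-(M:ℤ)) * (p:ℝ)^(M:ℤ) :=
          mul_le_mul_of_nonneg_left h (le_of_lt (zpow_pos pposR _))
      _ = 1 := by rw [← zpow_add₀ (ne_of_gt pposR)]; simp
  have hz1 : z = 1 ↔ ‖η‖ ≤ (p:ℝ)^(-(m:ℤ)) := by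
    rw [hzdef, stdChar_eq_one_iff, norm_div, Padic.norm_p_pow]
    rw [div_le_one (zpow_pos pposR _)]
  by_cases hc : ‖η‖ ≤ (p:ℝ)^(-(m:ℤ))
  · rw [if_pos hc]
    have hz : z = 1 := hz1.mpr hc
    calc ∑ a ∈ Finset.range (p^(m+M)), stdChar p ((a:ℚ_[p]) * η / (p:ℚ_[p])^m)
        = ∑ _a ∈ Finset.range (p^(m+M)), (1:ℂ) := by
          apply Finset.sum_congr rfl
          intro a _
          rw [hterm a, hz, one_pow]
      _ = ((p:ℂ)^(m+M)) := by
          rw [Finset.sum_const, Finset.card_range]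
          push_cast
          ring
  · rw [if_neg hc]
    have hz : z ≠ 1 := fun h' => hc (hz1.mp h')
    calc ∑ a ∈ Finset.range (p^(m+M)), stdChar p ((a:ℚ_[p]) * η / (p:ℚ_[p])^m)
        = ∑ a ∈ Finset.range (p^(m+M)), z ^ a := Finset.sum_congr rfl (fun a _ => hterm a)
      _ = (z ^ (p^(m+M)) - 1) / (z - 1) := geom_sum_eq hz _
      _ = 0 := by rw [hzN]; simp

lemma sum_char_pi {n : ℕ} (η : Fin n → ℚ_[p]) (m M : ℕ) (h : ∀ i, ‖η i‖ ≤ (p:ℝ)^(M:ℤ)) :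
    ∑ a ∈ Fintype.piFinset (fun _ : Fin n => Finset.range (p^(m+M))),
       stdChar p (∑ i, ((a i : ℚ_[p]) * η i / (p:ℚ_[p])^m))
     = if (∀ i, ‖η i‖ ≤ (p:ℝ)^(-(m:ℤ))) then ((p:ℂ)^((m+M)*n)) else 0 := by
  have step1 : ∑ a ∈ Fintype.piFinset (fun _ : Fin n => Finset.range (p^(m+M))),
       stdChar p (∑ i, ((a i : ℚ_[p]) * η i / (p:ℚ_[p])^m))
     = ∑ a ∈ Fintype.piFinset (fun _ : Fin n => Finset.range (p^(m+M))),
       ∏ i, stdChar p ((a i : ℚ_[p]) * η i / (p:ℚ_[p])^m) := by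
    apply Finset.sum_congr rfl
    intro a _
    exact stdChar_sum _ _
  have hpus := Finset.prod_univ_sum (fun _ : Fin n => Finset.range (p^(m+M)))
    (fun (i : Fin n) (j : ℕ) => stdChar p ((j : ℚ_[p]) * η i / (p:ℚ_[p])^m))
  rw [step1, ← hpus]
  have step2 : ∀ i : Fin n, (∑ j ∈ Finset.range (p^(m+M)),
      stdChar p ((j : ℚ_[p]) * η i / (p:ℚ_[p])^m))
      = if ‖η i‖ ≤ (p:ℝ)^(-(m:ℤ)) then ((p:ℂ)^(m+M)) else 0 := fun i => sum_char (η i) m M (h i)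
  by_cases hc : ∀ i, ‖η i‖ ≤ (p:ℝ)^(-(m:ℤ))
  · rw [if_pos hc]
    calc (∏ i : Fin n, ∑ j ∈ Finset.range (p^(m+M)), stdChar p ((j : ℚ_[p]) * η i / (p:ℚ_[p])^m))
        = ∏ _i : Fin n, ((p:ℂ)^(m+M)) := by
          apply Finset.prod_congr rfl
          intro i _
          rw [step2 i, if_pos (hc i)]
      _ = ((p:ℂ)^((m+M)*n)) := by rw [Finset.prod_const, Finset.card_univ, Fintype.card_fin, ← pow_mul]
  · rw [if_neg hc]
    push_neg at hc
    obtain ⟨i, hi⟩ := hc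
    apply Finset.prod_eq_zero (Finset.mem_univ i)
    rw [step2 i, if_neg (not_le.mpr hi)]

lemma ppow_nat (L : ℕ) : ((p:ℝ))^(L:ℤ) = (p:ℝ)^L := zpow_natCast _ _

lemma norm_div_ppow (a : ℚ_[p]) (L : ℕ) : ‖a / (p:ℚ_[p])^L‖ = ‖a‖ * (p:ℝ)^(L:ℤ) := by
  rw [norm_div, Padic.norm_p_pow, div_eq_mul_inv, ← zpow_neg, neg_neg]

lemma zpow_anti {s t : ℤ} (h : s ≤ t) : ((p:ℝ))^s ≤ (p:ℝ)^t :=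
  zpow_le_zpow_right₀ (le_of_lt oneltR) h

/-- indicator of the coordinatewise ball of radius `p^{-m}` centered at `ζ` -/
noncomputable def ballInd (n m : ℕ) (ζ : Fin n → ℚ_[p]) : (Fin n → ℚ_[p]) → ℂ :=
  fun ξ => if ∀ i, ‖ξ i - ζ i‖ ≤ (p:ℝ)^(-(m:ℤ)) then 1 else 0

lemma indicator_mem {n : ℕ} {S : Set ((Fin n → ℚ_[p]) → ℂ)}
    (hsmul : ∀ (c : ℂ), ∀ f ∈ S, c • f ∈ S)
    (hinv : ∀ (x y : Fin n → ℚ_[p]), ∀ f ∈ S, heisenbergOp p n x y f ∈ S)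
    (hsumS : ∀ (t : Finset (Fin n → ℕ)) (g : (Fin n → ℕ) → ((Fin n → ℚ_[p]) → ℂ)),
      (∀ a ∈ t, g a ∈ S) → (∑ a ∈ t, g a) ∈ S)
    {f : (Fin n → ℚ_[p]) → ℂ} (hfS : f ∈ S) (hlc : IsLocallyConstant f)
    (hcs : HasCompactSupport f) (hf0 : f ≠ 0) :
    ∃ m₀ : ℕ, ∀ m, m₀ ≤ m → ∀ ζ : Fin n → ℚ_[p], ballInd (p := p) n m ζ ∈ S := by
  -- a point where f is nonzero
  have hex : ∃ ξ₀, f ξ₀ ≠ 0 := by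
    by_contra hcon
    push_neg at hcon
    exact hf0 (funext hcon)
  obtain ⟨ξ₀, hξ₀⟩ := hex
  -- local constancy radius at ξ₀
  have hopen : IsOpen {x | f x = f ξ₀} := hlc.isOpen_fiber (f ξ₀)
  obtain ⟨ε, hε, hball⟩ := Metric.isOpen_iff.mp hopen ξ₀ (by simp)
  obtain ⟨m₀, hm₀⟩ := exists_pow_lt_of_lt_one hε
    (by rw [inv_lt_one₀ pposR]; exact oneltR : ((p:ℝ))⁻¹ < 1)
  have hm₀' : ((p:ℝ))^(-(m₀:ℤ)) < ε := by
    rw [zpow_neg, ppow_nat, ← inv_pow]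
    exact hm₀
  -- support bound
  obtain ⟨R, hR⟩ := hcs.isBounded.subset_closedBall ξ₀
  obtain ⟨M, hM⟩ := pow_unbounded_of_one_lt R (oneltR (p := p))
  have hsupp : ∀ ξ, f ξ ≠ 0 → ∀ i, ‖ξ i - ξ₀ i‖ ≤ (p:ℝ)^(M:ℤ) := by
    intro ξ hξ i
    have h1 : ξ ∈ tsupport f := subset_tsupport f hξ
    have h2 : dist ξ ξ₀ ≤ R := by simpa [Metric.mem_closedBall] using hR h1
    have h3 : dist (ξ i) (ξ₀ i) ≤ dist ξ ξ₀ := dist_le_pi_dist ξ ξ₀ i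
    rw [dist_eq_norm] at h3
    rw [ppow_nat]
    exact le_trans h3 (le_trans h2 (le_of_lt hM))
  refine ⟨m₀, ?_⟩
  intro m hm ζ
  -- constancy on the m-ball around ξ₀
  have hconst : ∀ ξ, (∀ i, ‖ξ i - ξ₀ i‖ ≤ (p:ℝ)^(-(m:ℤ))) → f ξ = f ξ₀ := by
    intro ξ hd
    apply hball
    rw [Metric.mem_ball]
    have hle : dist ξ ξ₀ ≤ (p:ℝ)^(-(m:ℤ)) := by
      rw [dist_pi_le_iff (le_of_lt (zpow_pos pposR _))]
      intro i
      rw [dist_eq_norm]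
      exact hd i
    calc dist ξ ξ₀ ≤ (p:ℝ)^(-(m:ℤ)) := hle
      _ ≤ (p:ℝ)^(-(m₀:ℤ)) := zpow_anti (by exact_mod_cast neg_le_neg (by exact_mod_cast hm : (m₀:ℤ) ≤ m))
      _ < ε := hm₀'
  -- the averaged function
  set A := Fintype.piFinset (fun _ : Fin n => Finset.range (p^(m+M))) with hAdef
  set g : (Fin n → ℚ_[p]) → ℂ := ∑ a ∈ A,
    (stdChar p (-∑ i, ((a i : ℚ_[p]) * ξ₀ i / (p:ℚ_[p])^m))) •
      heisenbergOp p n 0 (fun i => (a i : ℚ_[p]) / (p:ℚ_[p])^m) f with hgdef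
  have hgS : g ∈ S := hsumS A _ (fun a _ => hsmul _ _ (hinv 0 _ f hfS))
  have hgval : ∀ ξ, g ξ = f ξ *
      ∑ a ∈ A, stdChar p (∑ i, ((a i : ℚ_[p]) * (ξ i - ξ₀ i) / (p:ℚ_[p])^m)) := by
    intro ξ
    rw [hgdef, Finset.sum_apply, Finset.mul_sum]
    apply Finset.sum_congr rfl
    intro a _
    rw [Pi.smul_apply, smul_eq_mul, heisenbergOp]
    simp only [Pi.zero_apply, zero_mul, zero_div, add_zero, add_zero, mul_zero, zero_div]
    have hsplit : (-∑ i, ((a i : ℚ_[p]) * ξ₀ i / (p:ℚ_[p])^m)) +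
        (∑ i, ((a i : ℚ_[p]) / (p:ℚ_[p])^m * ξ i)) =
        ∑ i, ((a i : ℚ_[p]) * (ξ i - ξ₀ i) / (p:ℚ_[p])^m) := by
      rw [neg_add_eq_sub, ← Finset.sum_sub_distrib]
      apply Finset.sum_congr rfl
      intro i _
      ring
    rw [← hsplit, stdChar_add]
    ring
  -- identify g with the indicator
  have hC : g = (f ξ₀ * (p:ℂ)^((m+M)*n)) • ballInd (p := p) n m ξ₀ := by
    funext ξ
    rw [hgval ξ, Pi.smul_apply, smul_eq_mul]
    rw [ballInd]
    by_cases hc : ∀ i, ‖ξ i - ξ₀ i‖ ≤ (p:ℝ)^(-(m:ℤ))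
    · have hfe : f ξ = f ξ₀ := hconst ξ hc
      have hb : ∀ i, ‖ξ i - ξ₀ i‖ ≤ (p:ℝ)^(M:ℤ) := fun i =>
        le_trans (hc i) (zpow_anti (by omega))
      rw [sum_char_pi (fun i => ξ i - ξ₀ i) m M hb, if_pos hc, if_pos hc, hfe]
      ring
    · rw [if_neg hc, mul_zero]
      by_cases hf : f ξ = 0
      · rw [hf, zero_mul]
      · rw [sum_char_pi (fun i => ξ i - ξ₀ i) m M (hsupp ξ hf), if_neg hc, mul_zero]
  have hCne : (f ξ₀ * (p:ℂ)^((m+M)*n)) ≠ 0 :=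
    mul_ne_zero hξ₀ (pow_ne_zero _ (by exact_mod_cast pprime.ne_zero))
  have hιS : ballInd (p := p) n m ξ₀ ∈ S := by
    have h1 := hsmul (f ξ₀ * (p:ℂ)^((m+M)*n))⁻¹ g hgS
    rw [hC, smul_smul, inv_mul_cancel₀ hCne, one_smul] at h1
    exact h1
  -- translate the indicator to center ζ
  have htr : heisenbergOp p n (fun i => ξ₀ i - ζ i) 0 (ballInd (p := p) n m ξ₀)
      = ballInd (p := p) n m ζ := by
    funext ξ
    rw [heisenbergOp, ballInd, ballInd]
    simp only [Pi.zero_apply, zero_mul, mul_zero, zero_div, add_zero, zero_add]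
    rw [Finset.sum_const_zero, stdChar_zero, mul_one]
    have hcond : (∀ i, ‖(ξ + fun i => ξ₀ i - ζ i) i - ξ₀ i‖ ≤ (p:ℝ)^(-(m:ℤ)))
        ↔ (∀ i, ‖ξ i - ζ i‖ ≤ (p:ℝ)^(-(m:ℤ))) := by
      apply forall_congr'
      intro i
      have : (ξ + fun i => ξ₀ i - ζ i) i - ξ₀ i = ξ i - ζ i := by
        simp [Pi.add_apply]
        ring
      rw [this]
    by_cases hc : ∀ i, ‖ξ i - ζ i‖ ≤ (p:ℝ)^(-(m:ℤ))
    · rw [if_pos (hcond.mpr hc), if_pos hc]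
    · rw [if_neg (fun hx => hc (hcond.mp hx)), if_neg hc]
  rw [← htr]
  exact hinv _ 0 _ hιS

lemma span_mem {n : ℕ} {S : Set ((Fin n → ℚ_[p]) → ℂ)}
    (hsmul : ∀ (c : ℂ), ∀ f ∈ S, c • f ∈ S)
    (hsumS : ∀ (t : Finset (Fin n → ℕ)) (g : (Fin n → ℕ) → ((Fin n → ℚ_[p]) → ℂ)),
      (∀ a ∈ t, g a ∈ S) → (∑ a ∈ t, g a) ∈ S)
    {m₀ : ℕ} (hind : ∀ m, m₀ ≤ m → ∀ ζ : Fin n → ℚ_[p], ballInd (p := p) n m ζ ∈ S)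
    {h : (Fin n → ℚ_[p]) → ℂ} (hlc : IsLocallyConstant h) (hcs : HasCompactSupport h) :
    h ∈ S := by
  -- support bound
  obtain ⟨R, hR⟩ := hcs.isBounded.subset_closedBall 0
  obtain ⟨L, hL⟩ := pow_unbounded_of_one_lt R (oneltR (p := p))
  have hsupp : ∀ ξ, h ξ ≠ 0 → ∀ i, ‖ξ i‖ ≤ (p:ℝ)^(L:ℤ) := by
    intro ξ hξ i
    have h1 : ξ ∈ tsupport h := subset_tsupport h hξ
    have h2 : dist ξ 0 ≤ R := by simpa [Metric.mem_closedBall] using hR h1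
    have h3 : dist (ξ i) 0 ≤ dist ξ (0 : Fin n → ℚ_[p]) := dist_le_pi_dist ξ 0 i
    rw [dist_zero_right] at h3
    rw [ppow_nat]
    exact le_trans h3 (le_trans h2 (le_of_lt hL))
  -- Lebesgue number for the fibers of h on the support
  have hcov : tsupport h ⊆ ⋃ w : (Fin n → ℚ_[p]), {x | h x = h w} := by
    intro x _
    exact Set.mem_iUnion.mpr ⟨x, rfl⟩
  obtain ⟨δ, hδ, hleb⟩ := lebesgue_number_lemma_of_metric hcs
    (fun w => hlc.isOpen_fiber (h w)) hcov
  obtain ⟨m₁, hm₁⟩ := exists_pow_lt_of_lt_one hδ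
    (by rw [inv_lt_one₀ pposR]; exact oneltR : ((p:ℝ))⁻¹ < 1)
  set m := m₀ + m₁ with hmdef
  have hmδ : ((p:ℝ))^(-(m:ℤ)) < δ := by
    calc ((p:ℝ))^(-(m:ℤ)) ≤ ((p:ℝ))^(-(m₁:ℤ)) := zpow_anti (by omega)
      _ < δ := by rw [zpow_neg, ppow_nat, ← inv_pow]; exact hm₁
  -- uniform constancy at scale p^{-m}
  have hconst : ∀ ξ ζ : Fin n → ℚ_[p], (∀ i, ‖ξ i - ζ i‖ ≤ (p:ℝ)^(-(m:ℤ))) → h ξ = h ζ := by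
    intro ξ ζ hd
    have hdist : dist ξ ζ < δ := by
      have hle : dist ξ ζ ≤ (p:ℝ)^(-(m:ℤ)) := by
        rw [dist_pi_le_iff (le_of_lt (zpow_pos pposR _))]
        intro i
        rw [dist_eq_norm]
        exact hd i
      exact lt_of_le_of_lt hle hmδ
    by_cases hξK : ξ ∈ tsupport h
    · obtain ⟨w, hw⟩ := hleb ξ hξK
      have h1 : h ξ = h w := hw (Metric.mem_ball_self hδ)
      have h2 : h ζ = h w := hw (by rw [Metric.mem_ball, dist_comm]; exact hdist)
      rw [h1, h2]
    · by_cases hζK : ζ ∈ tsupport h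
      · obtain ⟨w, hw⟩ := hleb ζ hζK
        have h1 : h ζ = h w := hw (Metric.mem_ball_self hδ)
        have h2 : h ξ = h w := hw (by rw [Metric.mem_ball]; exact hdist)
        rw [h1, h2]
      · rw [image_eq_zero_of_notMem_tsupport hξK, image_eq_zero_of_notMem_tsupport hζK]
  -- centers
  set cb : (Fin n → ℕ) → (Fin n → ℚ_[p]) := fun b i => (b i : ℚ_[p]) / (p:ℚ_[p])^L with hcbdef
  set B := Fintype.piFinset (fun _ : Fin n => Finset.range (p^(L+m))) with hBdef
  have hdecomp : h = ∑ b ∈ B, (h (cb b)) • ballInd (p := p) n m (cb b) := by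
    funext ξ
    rw [Finset.sum_apply]
    by_cases hbig : ∀ i, ‖ξ i‖ ≤ (p:ℝ)^(L:ℤ)
    · -- construct the unique center b⋆
      have hint : ∀ i, ‖ξ i * (p:ℚ_[p])^L‖ ≤ 1 := by
        intro i
        rw [norm_mul, Padic.norm_p_pow]
        calc ‖ξ i‖ * (p:ℝ)^(-(L:ℤ)) ≤ (p:ℝ)^(L:ℤ) * (p:ℝ)^(-(L:ℤ)) :=
              mul_le_mul_of_nonneg_right (hbig i) (le_of_lt (zpow_pos pposR _))
          _ = 1 := by rw [← zpow_add₀ (ne_of_gt pposR)]; simp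
      obtain ⟨bs, hbs⟩ : ∃ bs : Fin n → ℕ,
          ∀ i, bs i = PadicInt.appr (⟨ξ i * (p:ℚ_[p])^L, hint i⟩ : ℤ_[p]) (L+m) :=
        ⟨_, fun _ => rfl⟩
      have hbsB : bs ∈ B := by
        rw [hBdef, Fintype.mem_piFinset]
        intro i
        rw [Finset.mem_range, hbs i]
        exact PadicInt.appr_lt _ _
      have hbsnear : ∀ i, ‖ξ i - cb bs i‖ ≤ (p:ℝ)^(-(m:ℤ)) := by
        intro i
        have hbsi := hbs i
        set y : ℤ_[p] := (⟨ξ i * (p:ℚ_[p])^L, hint i⟩ : ℤ_[p]) with hydef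
        have hap : ‖y - ((bs i : ℕ) : ℤ_[p])‖ ≤ (p:ℝ)^(-((L+m : ℕ):ℤ)) := by
          rw [PadicInt.norm_le_pow_iff_mem_span_pow, hbsi]
          exact PadicInt.appr_spec (L+m) y
        have heq : ξ i - cb bs i = ((y : ℚ_[p]) - ((bs i : ℕ) : ℚ_[p])) / (p:ℚ_[p])^L := by
          rw [hcbdef]
          have hpL : ((p:ℚ_[p]))^L ≠ 0 := pow_ne_zero _ pQ_ne_zero
          field_simp [hydef]
          rfl
        rw [heq, norm_div_ppow]
        have hcoe : ‖(y : ℚ_[p]) - ((bs i : ℕ) : ℚ_[p])‖ ≤ (p:ℝ)^(-((L+m : ℕ):ℤ)) := by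
          have hc2 : ((y - ((bs i : ℕ) : ℤ_[p]) : ℤ_[p]) : ℚ_[p])
              = (y : ℚ_[p]) - ((bs i : ℕ) : ℚ_[p]) := by push_cast; ring
          rw [← hc2, ← PadicInt.norm_def]
          exact hap
        calc ‖(y : ℚ_[p]) - ((bs i : ℕ) : ℚ_[p])‖ * (p:ℝ)^(L:ℤ)
            ≤ (p:ℝ)^(-((L+m : ℕ):ℤ)) * (p:ℝ)^(L:ℤ) :=
              mul_le_mul_of_nonneg_right hcoe (le_of_lt (zpow_pos pposR _))
          _ = (p:ℝ)^(-(m:ℤ)) := by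
              rw [← zpow_add₀ (ne_of_gt pposR)]
              congr 1
              push_cast
              ring
      -- other centers give zero
      have hzero : ∀ b ∈ B, b ≠ bs → ((h (cb b)) • ballInd (p := p) n m (cb b)) ξ = 0 := by
        intro b hbB hbne
        rw [Pi.smul_apply, smul_eq_mul, ballInd]
        rw [if_neg, mul_zero]
        intro hcl
        apply hbne
        funext i
        have hdiff : ‖cb b i - cb bs i‖ ≤ (p:ℝ)^(-(m:ℤ)) := by
          have h1 : cb b i - cb bs i = (cb b i - ξ i) + (ξ i - cb bs i) := by ring
          rw [h1]
          refine le_trans (Padic.nonarchimedean _ _) (max_le ?_ (hbsnear i))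
          rw [show cb b i - ξ i = -(ξ i - cb b i) by ring, norm_neg]
          exact hcl i
        have hdvd : ((p:ℤ))^(L+m) ∣ ((b i : ℤ) - (bs i : ℤ)) := by
          rw [← Padic.norm_int_le_pow_iff_dvd]
          have heq2 : (((b i : ℤ) - (bs i : ℤ) : ℤ) : ℚ_[p]) = (cb b i - cb bs i) * (p:ℚ_[p])^L := by
            rw [hcbdef]
            have hpL : ((p:ℚ_[p]))^L ≠ 0 := pow_ne_zero _ pQ_ne_zero
            field_simp
            push_cast
            ring
          rw [heq2, norm_mul, Padic.norm_p_pow]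
          calc ‖cb b i - cb bs i‖ * (p:ℝ)^(-(L:ℤ))
              ≤ (p:ℝ)^(-(m:ℤ)) * (p:ℝ)^(-(L:ℤ)) :=
                mul_le_mul_of_nonneg_right hdiff (le_of_lt (zpow_pos pposR _))
            _ = (p:ℝ)^(-((L+m : ℕ):ℤ)) := by
                rw [← zpow_add₀ (ne_of_gt pposR)]
                congr 1
                push_cast
                ring
        have hblt : b i < p^(L+m) := by
          have := (Fintype.mem_piFinset.mp hbB) i
          rwa [Finset.mem_range] at this
        have hbslt : bs i < p^(L+m) := by
          rw [hbs i]
          exact PadicInt.appr_lt _ _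
        have habs : |((b i : ℤ) - (bs i : ℤ))| < ((p:ℤ))^(L+m) := by
          rw [abs_lt]
          constructor
          · have : (0:ℤ) ≤ (b i : ℤ) := Int.ofNat_nonneg _
            have h2 : ((bs i : ℤ)) < ((p:ℤ))^(L+m) := by exact_mod_cast hbslt
            omega
          · have : (0:ℤ) ≤ (bs i : ℤ) := Int.ofNat_nonneg _
            have h2 : ((b i : ℤ)) < ((p:ℤ))^(L+m) := by exact_mod_cast hblt
            omega
        have := Int.eq_zero_of_abs_lt_dvd hdvd habs
        omega
      rw [Finset.sum_eq_single bs hzero (fun hx => absurd hbsB hx)]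
      rw [Pi.smul_apply, smul_eq_mul, ballInd, if_pos hbsnear, mul_one]
      exact hconst ξ (cb bs) hbsnear
    · -- ξ outside the big ball : everything vanishes
      push_neg at hbig
      obtain ⟨i, hi⟩ := hbig
      have hh0 : h ξ = 0 := by
        by_contra hcon
        exact absurd (hsupp ξ hcon i) (not_le.mpr hi)
      rw [hh0]
      symm
      apply Finset.sum_eq_zero
      intro b hbB
      rw [Pi.smul_apply, smul_eq_mul, ballInd, if_neg, mul_zero]
      intro hcl
      apply not_le.mpr hi
      have h1 : ξ i = (ξ i - cb b i) + cb b i := by ring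
      rw [h1]
      refine le_trans (Padic.nonarchimedean _ _) (max_le ?_ ?_)
      · exact le_trans (hcl i) (zpow_anti (by omega))
      · rw [hcbdef, norm_div_ppow]
        have hb1 : ‖((b i : ℕ) : ℚ_[p])‖ ≤ 1 := by
          have : (((b i : ℤ)) : ℚ_[p]) = ((b i : ℕ) : ℚ_[p]) := by push_cast; ring
          rw [← this]
          exact Padic.norm_int_le_one _
        calc ‖((b i : ℕ) : ℚ_[p])‖ * (p:ℝ)^(L:ℤ) ≤ 1 * (p:ℝ)^(L:ℤ) :=
              mul_le_mul_of_nonneg_right hb1 (le_of_lt (zpow_pos pposR _))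
          _ = (p:ℝ)^(L:ℤ) := one_mul _
  rw [hdecomp]
  exact hsumS B _ (fun b _ => hsmul _ _ (hind m (by omega) (cb b)))

end SchroedingerAux

open SchroedingerAux in
/-- The Schrödinger representation on `𝒟(ℚ_p^n)` is irreducible: any nonzero subspace
of locally constant compactly supported functions invariant under all `T_z` equals
all of `𝒟(ℚ_p^n)`. -/
theorem schrodinger_irreducible (p : ℕ) [Fact p.Prime] (n : ℕ)
    (S : Set ((Fin n → ℚ_[p]) → ℂ))
    (hD : ∀ f ∈ S, IsLocallyConstant f ∧ HasCompactSupport f)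
    (hadd : ∀ f ∈ S, ∀ g ∈ S, f + g ∈ S)
    (hsmul : ∀ (c : ℂ), ∀ f ∈ S, c • f ∈ S)
    (hinv : ∀ (x y : Fin n → ℚ_[p]), ∀ f ∈ S, heisenbergOp p n x y f ∈ S)
    (hne : ∃ f ∈ S, f ≠ 0) :
    S = {f : (Fin n → ℚ_[p]) → ℂ | IsLocallyConstant f ∧ HasCompactSupport f} := by
  obtain ⟨f, hfS, hf0⟩ := hne
  obtain ⟨hflc, hfcs⟩ := hD f hfS
  have hzeroS : (0 : (Fin n → ℚ_[p]) → ℂ) ∈ S := by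
    have := hsmul 0 f hfS
    rwa [zero_smul] at this
  have hsumS : ∀ (t : Finset (Fin n → ℕ)) (g : (Fin n → ℕ) → ((Fin n → ℚ_[p]) → ℂ)),
      (∀ a ∈ t, g a ∈ S) → (∑ a ∈ t, g a) ∈ S := by
    intro t g hg
    classical
    induction t using Finset.induction_on with
    | empty => simpa using hzeroS
    | @insert a t ha ih =>
        rw [Finset.sum_insert ha]
        exact hadd _ (hg a (Finset.mem_insert_self a t)) _
          (ih (fun b hb => hg b (Finset.mem_insert_of_mem hb)))
  obtain ⟨m₀, hind⟩ := indicator_mem hsmul hinv hsumS hfS hflc hfcs hf0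
  apply Set.Subset.antisymm
  · intro g hg
    exact hD g hg
  · intro h hh
    exact span_mem hsmul hsumS hind hh.1 hh.2
end

section
/- Let f ∈ 𝒟(ℚ_p^{2n}) and define the Weyl operator W_f[ψ](ξ) = ∫ f̌(z) ψ(ξ+x) χ(∑_i (y_i ξ_i + x_i y_i/2)) d^{2n}z, where f̌ is the symplectic Fourier transform of f. Then W_f maps 𝒟(ℚ_p^n) into 𝒟(ℚ_p^n), i.e. W_f[ψ] is locally constant with compact support for every ψ ∈ 𝒟(ℚ_p^n). -/
set_option linter.unusedSectionVars false
set_option maxHeartbeats 1000000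

open Classical MeasureTheory

variable (p : ℕ) [Fact p.Prime] (n : ℕ) [MeasurableSpace ℚ_[p]] [BorelSpace ℚ_[p]]
  (μ : Measure (Fin n → ℚ_[p]))

/-- The symplectic Fourier transform `F_s[f](z) = ∫ χ(J₀(z,z′)) f(z′) d^{2n}z′` on
`ℚ_p^{2n} = ℚ_p^n × ℚ_p^n`. -/
noncomputable def symplFourier
    (f : (Fin n → ℚ_[p]) × (Fin n → ℚ_[p]) → ℂ)
    (z : (Fin n → ℚ_[p]) × (Fin n → ℚ_[p])) : ℂ :=
  ∫ w, stdChar p ((∑ i, z.1 i * w.2 i) - ∑ i, z.2 i * w.1 i) * f w ∂(μ.prod μ)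

/-- The Weyl operator
`W_f[ψ](ξ) = ∫ f̌(z) ψ(ξ+x) χ(∑ᵢ (yᵢξᵢ + xᵢyᵢ/2)) d^{2n}z` with symbol `f`. -/
noncomputable def weylOp
    (f : (Fin n → ℚ_[p]) × (Fin n → ℚ_[p]) → ℂ)
    (ψ : (Fin n → ℚ_[p]) → ℂ) (ξ : Fin n → ℚ_[p]) : ℂ :=
  ∫ z, symplFourier p n μ f z * ψ (ξ + z.1) *
      stdChar p (∑ i, (z.2 i * ξ i + z.1 i * z.2 i / 2)) ∂(μ.prod μ)

namespace WeylAux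


/-- The defining predicate for `padicFract`. -/
def Pfr (x : ℚ_[p]) (r : ℚ) : Prop :=
  0 ≤ r ∧ r < 1 ∧ (∃ k : ℕ, ∃ m : ℤ, r * (p : ℚ) ^ k = (m : ℚ)) ∧ ‖x - (r : ℚ_[p])‖ ≤ 1

/-- A rational with `p`-power denominator and `p`-adic norm at most one is an integer. -/
theorem rat_int (d : ℚ) (K : ℕ) (a : ℤ) (hd : d * (p:ℚ) ^ K = a)
    (hn : ‖(d : ℚ_[p])‖ ≤ 1) : ∃ b : ℤ, d = b := by
  have hp : (p : ℚ) ≠ 0 := by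
    exact_mod_cast (Fact.out : p.Prime).ne_zero
  have hna : ‖(a : ℚ_[p])‖ ≤ (p:ℝ) ^ (-(K:ℤ)) := by
    have : ((a : ℚ) : ℚ_[p]) = (d : ℚ_[p]) * (p:ℚ_[p]) ^ K := by
      rw [← hd]; push_cast; ring
    rw [show ((a:ℤ):ℚ_[p]) = ((a:ℚ):ℚ_[p]) by push_cast; rfl, this, norm_mul,
      Padic.norm_p_pow]
    calc ‖(d:ℚ_[p])‖ * (p:ℝ) ^ (-(K:ℤ)) ≤ 1 * (p:ℝ) ^ (-(K:ℤ)) := by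
          apply mul_le_mul_of_nonneg_right hn (by positivity)
      _ = (p:ℝ) ^ (-(K:ℤ)) := one_mul _
  obtain ⟨b, hb⟩ := (Padic.norm_int_le_pow_iff_dvd a K).1 hna
  refine ⟨b, ?_⟩
  have : d * (p:ℚ)^K = (b : ℚ) * (p:ℚ)^K := by
    rw [hd, hb]; push_cast; ring
  exact mul_right_cancel₀ (by positivity) this

theorem Pfr_unique {x : ℚ_[p]} {r r' : ℚ} (h : Pfr p x r) (h' : Pfr p x r') : r = r' := by
  obtain ⟨h0, h1, ⟨k, m, hk⟩, hb⟩ := h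
  obtain ⟨h0', h1', ⟨k', m', hk'⟩, hb'⟩ := h'
  have hd : (r - r') * (p:ℚ) ^ (k + k') = ((m * (p:ℤ)^k' - m' * (p:ℤ)^k : ℤ) : ℚ) := by
    push_cast
    rw [pow_add]
    calc (r - r') * ((p:ℚ)^k * (p:ℚ)^k') = (r * (p:ℚ)^k) * (p:ℚ)^k' - (r' * (p:ℚ)^k') * (p:ℚ)^k := by ring
      _ = (m:ℚ) * (p:ℚ)^k' - (m':ℚ) * (p:ℚ)^k := by rw [hk, hk']
  have hn : ‖((r - r' : ℚ) : ℚ_[p])‖ ≤ 1 := by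
    have : ((r - r' : ℚ) : ℚ_[p]) = (x - (r' : ℚ_[p])) - (x - (r : ℚ_[p])) := by push_cast; ring
    rw [this]
    calc ‖(x - (r' : ℚ_[p])) - (x - (r : ℚ_[p]))‖
        = ‖(x - (r' : ℚ_[p])) + -(x - (r : ℚ_[p]))‖ := by rw [sub_eq_add_neg]
      _ ≤ max ‖x - (r' : ℚ_[p])‖ ‖-(x - (r : ℚ_[p]))‖ := Padic.nonarchimedean _ _
      _ ≤ 1 := by rw [norm_neg]; exact max_le hb' hb
  obtain ⟨b, hbq⟩ := rat_int p _ _ _ hd hn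
  have hb1 : (b : ℚ) < 1 := by rw [← hbq]; linarith
  have hb2 : (-1 : ℚ) < b := by rw [← hbq]; linarith
  have : b = 0 := by
    have h1 : b < 1 := by exact_mod_cast hb1
    have h2 : -1 < b := by exact_mod_cast hb2
    omega
  have : r - r' = 0 := by rw [hbq, this]; norm_num
  linarith

theorem Pfr_exists (x : ℚ_[p]) : ∃ r : ℚ, Pfr p x r := by
  have hp1 : (1:ℝ) < (p:ℝ) := by exact_mod_cast (Fact.out : p.Prime).one_lt
  -- find k with ‖x‖ ≤ p ^ k
  obtain ⟨k, hk⟩ : ∃ k : ℕ, ‖x‖ ≤ (p:ℝ) ^ k := by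
    obtain ⟨k, hk⟩ := pow_unbounded_of_one_lt ‖x‖ hp1
    exact ⟨k, hk.le⟩
  have hy : ‖(p:ℚ_[p]) ^ k * x‖ ≤ 1 := by
    rw [norm_mul, Padic.norm_p_pow]
    calc (p:ℝ) ^ (-(k:ℤ)) * ‖x‖ ≤ (p:ℝ) ^ (-(k:ℤ)) * (p:ℝ)^k := by
          apply mul_le_mul_of_nonneg_left hk (by positivity)
      _ = 1 := by
          rw [← zpow_natCast (p:ℝ) k, ← zpow_add₀ (by positivity : (p:ℝ) ≠ 0)]
          norm_num
  set y : ℤ_[p] := ⟨(p:ℚ_[p]) ^ k * x, hy⟩ with hydef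
  set a : ℕ := y.appr k with hadef
  have hspec := PadicInt.appr_spec k y
  rw [← PadicInt.norm_le_pow_iff_mem_span_pow] at hspec
  -- ‖ (p^k x) - a ‖ ≤ p^(-k)  in ℚ_p
  have hqa : ‖(p:ℚ_[p])^k * x - (a:ℚ_[p])‖ ≤ (p:ℝ) ^ (-(k:ℤ)) := by
    have : ((y - (a : ℤ_[p]) : ℤ_[p]) : ℚ_[p]) = (p:ℚ_[p])^k * x - (a:ℚ_[p]) := by
      rw [PadicInt.coe_sub, PadicInt.coe_natCast]
    rw [← this]
    exact_mod_cast hspec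
  -- so ‖x - a / p^k‖ ≤ 1
  have hpk0 : ((p:ℚ_[p]))^k ≠ 0 := by
    have : (p:ℚ_[p]) ≠ 0 := by exact_mod_cast (Nat.cast_ne_zero (R := ℚ_[p])).2 (Fact.out : p.Prime).ne_zero
    exact pow_ne_zero _ this
  set q : ℚ_[p] := (a:ℚ_[p]) / (p:ℚ_[p])^k with hqdef
  have h1 : ‖x - q‖ ≤ 1 := by
    have hxq : x - q = ((p:ℚ_[p])^k * x - (a:ℚ_[p])) * ((p:ℚ_[p])^k)⁻¹ := by
      field_simp [hqdef]; rw [hqdef, sub_mul, div_mul_cancel₀ _ hpk0]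
    rw [hxq, norm_mul, norm_inv, Padic.norm_p_pow]
    have hppos : (0:ℝ) < (p:ℝ) ^ (-(k:ℤ)) := by positivity
    calc ‖(p:ℚ_[p])^k * x - (a:ℚ_[p])‖ * ((p:ℝ) ^ (-(k:ℤ)))⁻¹
        ≤ (p:ℝ) ^ (-(k:ℤ)) * ((p:ℝ) ^ (-(k:ℤ)))⁻¹ := by
          apply mul_le_mul_of_nonneg_right hqa (by positivity)
      _ = 1 := mul_inv_cancel₀ (ne_of_gt hppos)
  have hpkq : ((p:ℚ))^k ≠ 0 := by
    have : (p : ℚ) ≠ 0 := by exact_mod_cast (Fact.out : p.Prime).ne_zero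
    exact pow_ne_zero _ this
  have hpknat : 0 < p ^ k := pow_pos (Fact.out : p.Prime).pos k
  set r : ℚ := ((a % p^k : ℕ) : ℚ) / (p:ℚ)^k with hrdef
  have hdivmod : (p:ℚ)^k * ((a / p^k : ℕ) : ℚ) + ((a % p^k : ℕ):ℚ) = (a:ℚ) := by
    exact_mod_cast congrArg (Nat.cast : ℕ → ℚ) (Nat.div_add_mod a (p^k))
  have hqr : ((a:ℚ)/(p:ℚ)^k - r) = ((a / p^k : ℕ) : ℚ) := by
    rw [hrdef]
    field_simp
    linarith [hdivmod]
  have h2 : ‖q - ((r:ℚ):ℚ_[p])‖ ≤ 1 := by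
    have hq' : q = (((a:ℚ)/(p:ℚ)^k : ℚ) : ℚ_[p]) := by push_cast [hqdef]; ring
    have : q - ((r:ℚ):ℚ_[p]) = ((((a / p^k : ℕ) : ℤ) : ℚ) : ℚ_[p]) := by
      rw [hq', ← Rat.cast_sub, hqr]; norm_cast
    rw [this, Rat.cast_intCast]
    exact Padic.norm_int_le_one _
  refine ⟨r, ?_, ?_, ⟨k, ((a % p^k : ℕ) : ℤ), ?_⟩, ?_⟩
  · positivity
  · rw [hrdef, div_lt_one (by positivity)]
    exact_mod_cast Nat.mod_lt a hpknat
  · rw [hrdef, div_mul_cancel₀ _ hpkq]; norm_cast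
  · have : x - ((r:ℚ):ℚ_[p]) = (x - q) + (q - ((r:ℚ):ℚ_[p])) := by ring
    rw [this]
    calc ‖(x - q) + (q - ((r:ℚ):ℚ_[p]))‖ ≤ max ‖x - q‖ ‖q - ((r:ℚ):ℚ_[p])‖ :=
          Padic.nonarchimedean _ _
      _ ≤ 1 := max_le h1 h2

theorem padicFract_spec (x : ℚ_[p]) : Pfr p x (padicFract p x) := by
  have hex : ∃ r : ℚ, 0 ≤ r ∧ r < 1 ∧ (∃ k : ℕ, ∃ m : ℤ, r * (p : ℚ) ^ k = (m : ℚ)) ∧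
      ‖x - (r : ℚ_[p])‖ ≤ 1 := Pfr_exists p x
  rw [padicFract, dif_pos hex]
  exact hex.choose_spec

theorem padicFract_eq_of {x y : ℚ_[p]} (h : ‖x - y‖ ≤ 1) :
    padicFract p x = padicFract p y := by
  have hx := padicFract_spec p x
  have hy := padicFract_spec p y
  apply Pfr_unique p (x := y) _ hy
  obtain ⟨h0, h1, h2, hb⟩ := hx
  refine ⟨h0, h1, h2, ?_⟩
  have : y - ((padicFract p x : ℚ) : ℚ_[p]) =
      (x - ((padicFract p x : ℚ) : ℚ_[p])) + -(x - y) := by ring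
  rw [this]
  calc ‖(x - ((padicFract p x : ℚ) : ℚ_[p])) + -(x - y)‖
      ≤ max ‖x - ((padicFract p x : ℚ) : ℚ_[p])‖ ‖-(x - y)‖ := Padic.nonarchimedean _ _
    _ ≤ 1 := by rw [norm_neg]; exact max_le hb h

theorem stdChar_eq_of {x y : ℚ_[p]} (h : ‖x - y‖ ≤ 1) : stdChar p x = stdChar p y := by
  rw [stdChar, stdChar, padicFract_eq_of p h]

theorem stdChar_add (x y : ℚ_[p]) : stdChar p (x + y) = stdChar p x * stdChar p y := by
  obtain ⟨hr0, hr1, ⟨kr, mr, hkr⟩, hbr⟩ := padicFract_spec p x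
  obtain ⟨hs0, hs1, ⟨ks, ms, hks⟩, hbs⟩ := padicFract_spec p y
  obtain ⟨ht0, ht1, ⟨kt, mt, hkt⟩, hbt⟩ := padicFract_spec p (x + y)
  set r := padicFract p x
  set s := padicFract p y
  set t := padicFract p (x + y)
  have hd : (r + s - t) * (p:ℚ) ^ (kr + ks + kt) =
      ((mr * (p:ℤ)^(ks+kt) + ms * (p:ℤ)^(kr+kt) - mt * (p:ℤ)^(kr+ks) : ℤ) : ℚ) := by
    push_cast
    linear_combination (p:ℚ)^(ks+kt) * hkr + (p:ℚ)^(kr+kt) * hks - (p:ℚ)^(kr+ks) * hkt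
  have hn : ‖((r + s - t : ℚ) : ℚ_[p])‖ ≤ 1 := by
    have : ((r + s - t : ℚ) : ℚ_[p]) =
        ((x + y) - ((t:ℚ):ℚ_[p])) + (-(x - ((r:ℚ):ℚ_[p])) + -(y - ((s:ℚ):ℚ_[p]))) := by
      push_cast; ring
    rw [this]
    calc ‖((x + y) - ((t:ℚ):ℚ_[p])) + (-(x - ((r:ℚ):ℚ_[p])) + -(y - ((s:ℚ):ℚ_[p])))‖
        ≤ max ‖(x + y) - ((t:ℚ):ℚ_[p])‖ ‖-(x - ((r:ℚ):ℚ_[p])) + -(y - ((s:ℚ):ℚ_[p]))‖ :=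
          Padic.nonarchimedean _ _
      _ ≤ max ‖(x + y) - ((t:ℚ):ℚ_[p])‖
            (max ‖-(x - ((r:ℚ):ℚ_[p]))‖ ‖-(y - ((s:ℚ):ℚ_[p]))‖) := by
          apply max_le_max le_rfl (Padic.nonarchimedean _ _)
      _ ≤ 1 := by
          rw [norm_neg, norm_neg]
          exact max_le hbt (max_le hbr hbs)
  obtain ⟨b, hb⟩ := rat_int p _ _ _ hd hn
  rw [stdChar, stdChar, stdChar, ← Complex.exp_add]
  have : (r : ℂ) + s = t + b := by
    have : (r + s : ℚ) = t + (b:ℚ) := by linarith [hb.symm ▸ (by linarith : r + s - t = r + s - t)]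
    exact_mod_cast this
  rw [← mul_add, this]
  rw [show (2 * Real.pi * Complex.I * ((t:ℂ) + (b:ℂ))) =
    2 * Real.pi * Complex.I * (t:ℂ) + (b:ℂ) * (2 * Real.pi * Complex.I) by ring]
  rw [Complex.exp_add, Complex.exp_int_mul_two_pi_mul_I, mul_one]

theorem norm_stdChar (x : ℚ_[p]) : ‖stdChar p x‖ = 1 := by
  rw [stdChar, Complex.norm_exp]
  have : (2 * Real.pi * Complex.I * ((padicFract p x : ℚ) : ℂ)).re = 0 := by
    simp [Complex.mul_re, Complex.mul_im]
  rw [this, Real.exp_zero]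

theorem stdChar_ne_one {x : ℚ_[p]} (h : 1 < ‖x‖) : stdChar p x ≠ 1 := by
  obtain ⟨h0, h1, _, hb⟩ := padicFract_spec p x
  set r := padicFract p x
  have hr0 : r ≠ 0 := by
    intro h0'
    rw [h0'] at hb
    push_cast at hb
    rw [sub_zero] at hb
    linarith
  intro hone
  rw [stdChar, Complex.exp_eq_one_iff] at hone
  obtain ⟨m, hm⟩ := hone
  have h2pi : (2 * (Real.pi:ℂ) * Complex.I) ≠ 0 := by
    simp [Real.pi_ne_zero, Complex.I_ne_zero]
  have : ((r:ℚ):ℂ) = (m:ℂ) := by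
    apply mul_left_cancel₀ h2pi
    rw [hm]; ring
  have hrm : (r:ℚ) = (m:ℚ) := by exact_mod_cast this
  have hm0 : 0 ≤ m := by exact_mod_cast hrm ▸ h0
  have hm1 : m < 1 := by exact_mod_cast hrm ▸ h1
  have : m = 0 := by omega
  exact hr0 (by rw [hrm, this]; norm_num)

theorem ulc {E : Type*} [SeminormedAddCommGroup E] {g : E → ℂ}
    (hg : IsLocallyConstant g) (hgc : HasCompactSupport g) :
    ∃ ε : ℝ, 0 < ε ∧ ∀ (x δ : E), ‖δ‖ ≤ ε → g (x + δ) = g x := by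
  have h1 : ∀ y : E, ∃ U : Set E, IsOpen U ∧ y ∈ U ∧ ∀ x ∈ U, g x = g y :=
    (IsLocallyConstant.iff_exists_open g).1 hg
  choose U hUo hUy hUc using h1
  obtain ⟨d, hd, hball⟩ := lebesgue_number_lemma_of_metric hgc hUo
    (fun x _ => Set.mem_iUnion.2 ⟨x, hUy x⟩)
  refine ⟨d/2, by linarith, fun x δ hδ => ?_⟩
  by_cases hx : x ∈ tsupport g
  · obtain ⟨i, hi⟩ := hball x hx
    have hxU : x ∈ U i := hi (Metric.mem_ball_self hd)
    have hxdU : x + δ ∈ U i := hi (by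
      rw [Metric.mem_ball, dist_eq_norm, add_sub_cancel_left]
      linarith)
    rw [hUc i _ hxdU, hUc i _ hxU]
  · by_cases hxd : x + δ ∈ tsupport g
    · obtain ⟨i, hi⟩ := hball _ hxd
      have h1' : x + δ ∈ U i := hi (Metric.mem_ball_self hd)
      have h2' : x ∈ U i := hi (by
        rw [Metric.mem_ball, dist_eq_norm]
        have : x - (x + δ) = -δ := by abel
        rw [this, norm_neg]
        linarith)
      rw [hUc i _ h1', hUc i _ h2']
    · rw [image_eq_zero_of_notMem_tsupport hx, image_eq_zero_of_notMem_tsupport hxd]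

theorem support_bound {E : Type*} [SeminormedAddCommGroup E] {g : E → ℂ}
    (hgc : HasCompactSupport g) : ∃ R : ℝ, 0 < R ∧ ∀ x, g x ≠ 0 → ‖x‖ ≤ R := by
  obtain ⟨r, hr⟩ := hgc.isBounded.subset_closedBall 0
  refine ⟨max r 1, lt_of_lt_of_le one_pos (le_max_right _ _), fun x hx => ?_⟩
  have hx' : x ∈ tsupport g := subset_tsupport g (by simpa [Function.mem_support] using hx)
  have := hr hx'
  rw [Metric.mem_closedBall, dist_zero_right] at this
  exact le_trans this (le_max_left _ _)


theorem sum_norm_le_one {ι : Type*} (s : Finset ι) (g : ι → ℚ_[p])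
    (h : ∀ i ∈ s, ‖g i‖ ≤ 1) : ‖∑ i ∈ s, g i‖ ≤ 1 := by
  classical
  induction s using Finset.induction with
  | empty => simp
  | @insert a s ha ih =>
    rw [Finset.sum_insert ha]
    refine le_trans (Padic.nonarchimedean _ _) (max_le (h _ (Finset.mem_insert_self _ _))
      (ih fun i hi => h i (Finset.mem_insert_of_mem hi)))

theorem pi_nonarch {ι : Type*} [Fintype ι] (a b : ι → ℚ_[p]) : ‖a + b‖ ≤ max ‖a‖ ‖b‖ := by
  refine (pi_norm_le_iff_of_nonneg (le_max_of_le_left (norm_nonneg a))).2 fun i => ?_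
  calc ‖(a + b) i‖ = ‖a i + b i‖ := rfl
    _ ≤ max ‖a i‖ ‖b i‖ := Padic.nonarchimedean _ _
    _ ≤ max ‖a‖ ‖b‖ := max_le_max (norm_le_pi_norm a i) (norm_le_pi_norm b i)

/-- The symplectic pairing. -/
noncomputable def Bf (z w : (Fin n → ℚ_[p]) × (Fin n → ℚ_[p])) : ℚ_[p] :=
  (∑ i, z.1 i * w.2 i) - ∑ i, z.2 i * w.1 i

theorem symplFourier_eq (f : (Fin n → ℚ_[p]) × (Fin n → ℚ_[p]) → ℂ)
    (z : (Fin n → ℚ_[p]) × (Fin n → ℚ_[p])) :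
    symplFourier p n μ f z = ∫ w, stdChar p (Bf p n z w) * f w ∂(μ.prod μ) := rfl

theorem symplFourier_locallyConstant
    (f : (Fin n → ℚ_[p]) × (Fin n → ℚ_[p]) → ℂ) (hfc : HasCompactSupport f) :
    IsLocallyConstant (symplFourier p n μ f) := by
  obtain ⟨R, hR0, hRb⟩ := support_bound hfc
  rw [IsLocallyConstant.iff_exists_open]
  intro z₀
  refine ⟨Metric.ball z₀ (1/R), Metric.isOpen_ball, Metric.mem_ball_self (by positivity), ?_⟩
  intro z hz
  rw [symplFourier_eq, symplFourier_eq]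
  refine integral_congr_ae (Filter.Eventually.of_forall fun w => ?_)
  show stdChar p (Bf p n z w) * f w = stdChar p (Bf p n z₀ w) * f w
  by_cases hw : f w = 0
  · rw [hw, mul_zero, mul_zero]
  · have hwb : ‖w‖ ≤ R := hRb w hw
    have hw1 : ∀ i, ‖w.1 i‖ ≤ R := fun i =>
      le_trans (le_trans (norm_le_pi_norm w.1 i) (norm_fst_le w)) hwb
    have hw2 : ∀ i, ‖w.2 i‖ ≤ R := fun i =>
      le_trans (le_trans (norm_le_pi_norm w.2 i) (norm_snd_le w)) hwb
    have hz1 : ∀ i, ‖z.1 i - z₀.1 i‖ < 1/R := by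
      intro i
      calc ‖z.1 i - z₀.1 i‖ = dist (z.1 i) (z₀.1 i) := (dist_eq_norm _ _).symm
        _ ≤ dist z.1 z₀.1 := dist_le_pi_dist _ _ i
        _ ≤ dist z z₀ := by rw [Prod.dist_eq]; exact le_max_left _ _
        _ < 1/R := hz
    have hz2 : ∀ i, ‖z.2 i - z₀.2 i‖ < 1/R := by
      intro i
      calc ‖z.2 i - z₀.2 i‖ = dist (z.2 i) (z₀.2 i) := (dist_eq_norm _ _).symm
        _ ≤ dist z.2 z₀.2 := dist_le_pi_dist _ _ i
        _ ≤ dist z z₀ := by rw [Prod.dist_eq]; exact le_max_right _ _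
        _ < 1/R := hz
    have hdiff : Bf p n z w - Bf p n z₀ w =
        (∑ i, (z.1 i - z₀.1 i) * w.2 i) + -(∑ i, (z.2 i - z₀.2 i) * w.1 i) := by
      simp only [Bf, sub_mul, Finset.sum_sub_distrib]
      ring
    have hterm : ∀ (u v : ℚ_[p]), ‖u‖ < 1/R → ‖v‖ ≤ R → ‖u * v‖ ≤ 1 := by
      intro u v hu hv
      rw [norm_mul]
      calc ‖u‖ * ‖v‖ ≤ (1/R) * R :=
            mul_le_mul hu.le hv (norm_nonneg _) (by positivity)
        _ = 1 := by field_simp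
    have hb : ‖Bf p n z w - Bf p n z₀ w‖ ≤ 1 := by
      rw [hdiff]
      calc ‖(∑ i, (z.1 i - z₀.1 i) * w.2 i) + -(∑ i, (z.2 i - z₀.2 i) * w.1 i)‖
          ≤ max ‖∑ i, (z.1 i - z₀.1 i) * w.2 i‖ ‖-(∑ i, (z.2 i - z₀.2 i) * w.1 i)‖ :=
            Padic.nonarchimedean _ _
        _ ≤ 1 := by
            rw [norm_neg]
            exact max_le
              (sum_norm_le_one p _ _ fun i _ => hterm _ _ (hz1 i) (hw2 i))
              (sum_norm_le_one p _ _ fun i _ => hterm _ _ (hz2 i) (hw1 i))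
    rw [stdChar_eq_of p hb]

theorem symplFourier_vanish [μ.IsAddHaarMeasure]
    (f : (Fin n → ℚ_[p]) × (Fin n → ℚ_[p]) → ℂ)
    (z δ : (Fin n → ℚ_[p]) × (Fin n → ℚ_[p])) (c : ℚ_[p])
    (hδ : ∀ w, f (w + δ) = f w)
    (harg : ∀ w, Bf p n z (w + δ) = Bf p n z w + c)
    (hc : stdChar p c ≠ 1) : symplFourier p n μ f z = 0 := by
  haveI : (μ.prod μ).IsAddRightInvariant := Measure.prod.instIsAddRightInvariant
  have h1 : symplFourier p n μ f z
      = ∫ w, stdChar p (Bf p n z (w + δ)) * f (w + δ) ∂(μ.prod μ) := by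
    rw [symplFourier_eq]
    exact (integral_add_right_eq_self (fun w => stdChar p (Bf p n z w) * f w) δ).symm
  have h2 : ∀ w, stdChar p (Bf p n z (w + δ)) * f (w + δ)
      = stdChar p c • (stdChar p (Bf p n z w) * f w) := by
    intro w
    rw [hδ, harg, stdChar_add, smul_eq_mul]
    ring
  have h3 : symplFourier p n μ f z = stdChar p c * symplFourier p n μ f z := by
    conv_lhs => rw [h1]
    simp_rw [h2]
    rw [integral_smul, smul_eq_mul, ← symplFourier_eq]
  have h4 : (1 - stdChar p c) * symplFourier p n μ f z = 0 := by
    linear_combination h3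
  rcases mul_eq_zero.1 h4 with h | h
  · exact absurd (by linear_combination -h : stdChar p c = 1) hc
  · exact h


theorem symplFourier_hasCompactSupport [μ.IsAddHaarMeasure]
    (f : (Fin n → ℚ_[p]) × (Fin n → ℚ_[p]) → ℂ)
    (hf : IsLocallyConstant f) (hfc : HasCompactSupport f) :
    HasCompactSupport (symplFourier p n μ f) := by
  obtain ⟨ε, hε, hUC⟩ := ulc hf hfc
  have hp1 : (1:ℝ) < (p:ℝ) := by exact_mod_cast (Fact.out : p.Prime).one_lt
  have hppos : (0:ℝ) < (p:ℝ) := lt_trans one_pos hp1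
  obtain ⟨m, hm⟩ : ∃ m : ℕ, ((p:ℝ))⁻¹ ^ m < ε :=
    exists_pow_lt_of_lt_one hε (by rw [inv_lt_one_iff₀]; right; exact hp1)
  have hnt : ‖(p:ℚ_[p]) ^ m‖ = ((p:ℝ))⁻¹ ^ m := by
    rw [Padic.norm_p_pow, zpow_neg, zpow_natCast, inv_pow]
  apply HasCompactSupport.intro
    (isCompact_closedBall (0 : (Fin n → ℚ_[p]) × (Fin n → ℚ_[p])) ((p:ℝ) ^ m))
  intro z hz
  rw [Metric.mem_closedBall, dist_zero_right] at hz
  push_neg at hz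
  have hcoord : (∃ i, (p:ℝ) ^ m < ‖z.1 i‖) ∨ (∃ i, (p:ℝ) ^ m < ‖z.2 i‖) := by
    by_contra hcon
    push_neg at hcon
    obtain ⟨h1, h2⟩ := hcon
    have hn1 : ‖z.1‖ ≤ (p:ℝ) ^ m := (pi_norm_le_iff_of_nonneg (by positivity)).2 h1
    have hn2 : ‖z.2‖ ≤ (p:ℝ) ^ m := (pi_norm_le_iff_of_nonneg (by positivity)).2 h2
    have : ‖z‖ ≤ (p:ℝ) ^ m := by rw [Prod.norm_def]; exact max_le hn1 hn2
    linarith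
  set t : ℚ_[p] := (p:ℚ_[p]) ^ m with htdef
  have hsingle_norm : ∀ i : Fin n, ‖(Pi.single i t : Fin n → ℚ_[p])‖ ≤ ε := by
    intro i
    refine (pi_norm_le_iff_of_nonneg hε.le).2 fun j => ?_
    by_cases hji : j = i
    · subst hji; rw [Pi.single_eq_same, hnt]; exact hm.le
    · rw [Pi.single_eq_of_ne hji]; simpa using hε.le
  have honelt : ∀ u : ℚ_[p], (p:ℝ) ^ m < ‖u‖ → 1 < ‖u * t‖ := by
    intro u hu
    rw [norm_mul, hnt]
    have h0 : (0:ℝ) < ((p:ℝ)⁻¹) ^ m := by positivity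
    calc (1:ℝ) = (p:ℝ) ^ m * ((p:ℝ)⁻¹) ^ m := by
          rw [← mul_pow, mul_inv_cancel₀ (ne_of_gt hppos), one_pow]
      _ < ‖u‖ * ((p:ℝ)⁻¹) ^ m := mul_lt_mul_of_pos_right hu h0
  rcases hcoord with ⟨i, hi⟩ | ⟨i, hi⟩
  · refine symplFourier_vanish p n μ f z ((0 : Fin n → ℚ_[p]), Pi.single i t)
      (z.1 i * t) ?_ ?_ ?_
    · intro w
      apply hUC
      rw [Prod.norm_def]
      exact max_le (by simpa using hε.le) (hsingle_norm i)
    · intro w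
      simp only [Bf, Prod.fst_add, Prod.snd_add, Pi.add_apply, Pi.zero_apply, add_zero,
        mul_add, Finset.sum_add_distrib]
      have hsum : ∑ j, z.1 j * (Pi.single i t : Fin n → ℚ_[p]) j = z.1 i * t := by
        rw [Fintype.sum_eq_single i (fun j hj => by
          rw [Pi.single_eq_of_ne hj, mul_zero] : ∀ j, j ≠ i → z.1 j * (Pi.single i t : Fin n → ℚ_[p]) j = 0)]
        rw [Pi.single_eq_same]
      rw [hsum]
      ring
    · exact stdChar_ne_one p (honelt _ hi)
  · refine symplFourier_vanish p n μ f z (Pi.single i t, (0 : Fin n → ℚ_[p]))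
      (-(z.2 i * t)) ?_ ?_ ?_
    · intro w
      apply hUC
      rw [Prod.norm_def]
      exact max_le (hsingle_norm i) (by simpa using hε.le)
    · intro w
      simp only [Bf, Prod.fst_add, Prod.snd_add, Pi.add_apply, Pi.zero_apply, add_zero,
        mul_add, Finset.sum_add_distrib]
      have hsum : ∑ j, z.2 j * (Pi.single i t : Fin n → ℚ_[p]) j = z.2 i * t := by
        rw [Fintype.sum_eq_single i (fun j hj => by
          rw [Pi.single_eq_of_ne hj, mul_zero] : ∀ j, j ≠ i → z.2 j * (Pi.single i t : Fin n → ℚ_[p]) j = 0)]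
        rw [Pi.single_eq_same]
      rw [hsum]
      ring
    · apply stdChar_ne_one p
      rw [norm_neg]
      exact honelt _ hi

end WeylAux

open WeylAux

/-- The Weyl operator `W_f` with symbol `f ∈ 𝒟(ℚ_p^{2n})` maps `𝒟(ℚ_p^n)` into
`𝒟(ℚ_p^n)`: `W_f[ψ]` is locally constant with compact support. -/
theorem weylOp_maps_test_functions [μ.IsAddHaarMeasure]
    (hμ : μ {x : Fin n → ℚ_[p] | ∀ i, ‖x i‖ ≤ 1} = 1)
    (f : (Fin n → ℚ_[p]) × (Fin n → ℚ_[p]) → ℂ)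
    (hf : IsLocallyConstant f) (hfc : HasCompactSupport f)
    (ψ : (Fin n → ℚ_[p]) → ℂ)
    (hψ : IsLocallyConstant ψ) (hψc : HasCompactSupport ψ) :
    IsLocallyConstant (weylOp p n μ f ψ) ∧ HasCompactSupport (weylOp p n μ f ψ) := by
  classical
  have hFlc : IsLocallyConstant (symplFourier p n μ f) :=
    symplFourier_locallyConstant p n μ f hfc
  have hFc : HasCompactSupport (symplFourier p n μ f) :=
    symplFourier_hasCompactSupport p n μ f hf hfc
  constructor
  · -- local constancy
    obtain ⟨ε, hε, hUCψ⟩ := ulc hψ hψc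
    obtain ⟨RF, hRF0, hRFb⟩ := support_bound hFc
    set ε' := min ε (1/RF) with hε'def
    have hε'pos : 0 < ε' := lt_min hε (by positivity)
    rw [IsLocallyConstant.iff_exists_open]
    intro ξ₀
    refine ⟨Metric.ball ξ₀ ε', Metric.isOpen_ball, Metric.mem_ball_self hε'pos,
      fun ξ hξ => ?_⟩
    set δ := ξ - ξ₀ with hδdef
    have hδn : ‖δ‖ < ε' := by
      rw [hδdef, ← dist_eq_norm]; exact hξ
    have hξeq : ξ = ξ₀ + δ := by rw [hδdef]; abel
    have hptw : ∀ z : (Fin n → ℚ_[p]) × (Fin n → ℚ_[p]),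
        symplFourier p n μ f z * ψ (ξ + z.1) *
          stdChar p (∑ i, (z.2 i * ξ i + z.1 i * z.2 i / 2))
        = symplFourier p n μ f z * ψ (ξ₀ + z.1) *
          stdChar p (∑ i, (z.2 i * ξ₀ i + z.1 i * z.2 i / 2)) := by
      intro z
      by_cases hFz : symplFourier p n μ f z = 0
      · rw [hFz, zero_mul, zero_mul, zero_mul, zero_mul]
      · have hz2 : ∀ i, ‖z.2 i‖ ≤ RF := fun i =>
          le_trans (le_trans (norm_le_pi_norm z.2 i) (norm_snd_le z)) (hRFb z hFz)
        have hψeq : ψ (ξ + z.1) = ψ (ξ₀ + z.1) := by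
          rw [hξeq, show ξ₀ + δ + z.1 = (ξ₀ + z.1) + δ by abel]
          exact hUCψ (ξ₀ + z.1) δ (le_trans hδn.le (min_le_left _ _))
        have hχeq : stdChar p (∑ i, (z.2 i * ξ i + z.1 i * z.2 i / 2))
            = stdChar p (∑ i, (z.2 i * ξ₀ i + z.1 i * z.2 i / 2)) := by
          apply stdChar_eq_of
          have hdiff : (∑ i, (z.2 i * ξ i + z.1 i * z.2 i / 2))
              - (∑ i, (z.2 i * ξ₀ i + z.1 i * z.2 i / 2)) = ∑ i, z.2 i * δ i := by
            rw [← Finset.sum_sub_distrib]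
            refine Finset.sum_congr rfl fun i _ => ?_
            rw [hδdef, Pi.sub_apply]
            ring
          rw [hdiff]
          refine sum_norm_le_one p _ _ fun i _ => ?_
          rw [norm_mul]
          have h1 : ‖δ i‖ ≤ 1/RF :=
            le_trans (norm_le_pi_norm δ i) (le_trans hδn.le (min_le_right _ _))
          calc ‖z.2 i‖ * ‖δ i‖ ≤ RF * (1/RF) :=
                mul_le_mul (hz2 i) h1 (norm_nonneg _) hRF0.le
            _ = 1 := by field_simp
        rw [hψeq, hχeq]
    show (∫ z, symplFourier p n μ f z * ψ (ξ + z.1) *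
        stdChar p (∑ i, (z.2 i * ξ i + z.1 i * z.2 i / 2)) ∂(μ.prod μ))
      = (∫ z, symplFourier p n μ f z * ψ (ξ₀ + z.1) *
        stdChar p (∑ i, (z.2 i * ξ₀ i + z.1 i * z.2 i / 2)) ∂(μ.prod μ))
    exact integral_congr_ae (Filter.Eventually.of_forall hptw)
  · -- compact support
    obtain ⟨RF, hRF0, hRFb⟩ := support_bound hFc
    obtain ⟨Rψ, hRψ0, hRψb⟩ := support_bound hψc
    apply HasCompactSupport.intro
      (isCompact_closedBall (0 : Fin n → ℚ_[p]) (max RF Rψ))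
    intro ξ hξ
    rw [Metric.mem_closedBall, dist_zero_right] at hξ
    push_neg at hξ
    have hptw : ∀ z : (Fin n → ℚ_[p]) × (Fin n → ℚ_[p]),
        symplFourier p n μ f z * ψ (ξ + z.1) *
          stdChar p (∑ i, (z.2 i * ξ i + z.1 i * z.2 i / 2)) = (0:ℂ) := by
      intro z
      by_cases hFz : symplFourier p n μ f z = 0
      · rw [hFz, zero_mul, zero_mul]
      · have hz1 : ‖z.1‖ ≤ RF := le_trans (norm_fst_le z) (hRFb z hFz)
        have hψ0 : ψ (ξ + z.1) = 0 := by
          by_contra hne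
          have hb := hRψb _ hne
          have hξle : ‖ξ‖ ≤ max ‖ξ + z.1‖ ‖z.1‖ := by
            calc ‖ξ‖ = ‖(ξ + z.1) + -z.1‖ := by rw [add_neg_cancel_right]
              _ ≤ max ‖ξ + z.1‖ ‖-z.1‖ := pi_nonarch p _ _
              _ = max ‖ξ + z.1‖ ‖z.1‖ := by rw [norm_neg]
          have : ‖ξ‖ ≤ max RF Rψ := le_trans hξle
            (max_le (le_trans hb (le_max_right _ _)) (le_trans hz1 (le_max_left _ _)))
          linarith
        rw [hψ0, mul_zero, zero_mul]
    show (∫ z, symplFourier p n μ f z * ψ (ξ + z.1) *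
        stdChar p (∑ i, (z.2 i * ξ i + z.1 i * z.2 i / 2)) ∂(μ.prod μ)) = 0
    rw [show (fun z : (Fin n → ℚ_[p]) × (Fin n → ℚ_[p]) =>
        symplFourier p n μ f z * ψ (ξ + z.1) *
        stdChar p (∑ i, (z.2 i * ξ i + z.1 i * z.2 i / 2))) = fun _ => (0:ℂ) from
      funext hptw]
    exact integral_zero _ _
end
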